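/- If a group G acts freely on X (only the identity fixes any point), Y ⊆ X is finite nonempty, and 0 < α ≤ 1, then |Sym_α(Y)| ≤ |Y|/α, i.e., α·|Sym_α(Y)| ≤ |Y|, where Sym_α(Y) = {g ∈ G : |Y ∩ gY| ≥ α|Y|} is assumed finite (it is finite since each g ∈ Sym_α(Y) is determined by a pair (y, y') ∈ Y × Y with gy = y'). -/

import Mathlib

open scoped Classical

theorem stmt9 {G X : Type*} [Group G] [MulAction G X]
    (hfree : ∀ g : G, g ≠ 1 → ∀ x : X, g • x ≠ x)
    (Y : Finset X) (hY : Y.Nonempty) (α : ℝ) (hα0 : 0 < α) (hα1 : α ≤ 1)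
    (hfin : {g : G | α * Y.card ≤ ((Y ∩ Y.image (fun y => g • y)).card : ℝ)}.Finite) :
    α * ({g : G | α * Y.card ≤
        ((Y ∩ Y.image (fun y => g • y)).card : ℝ)}.ncard : ℝ) ≤ Y.card := by
  set S := hfin.toFinset with hS
  have hncard : {g : G | α * Y.card ≤
      ((Y ∩ Y.image (fun y => g • y)).card : ℝ)}.ncard = S.card := by
    rw [hS, Set.ncard_eq_toFinset_card _ hfin]
  rw [hncard]
  -- key combinatorial bound
  have key : ∑ g ∈ S, (Y ∩ Y.image (fun y => g • y)).card ≤ Y.card * Y.card := by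
    rw [← Finset.card_sigma, ← Finset.card_product]
    apply Finset.card_le_card_of_injOn (fun p => (p.2, p.1⁻¹ • p.2))
    · rintro ⟨g, y⟩ hp
      simp only [Finset.mem_coe, Finset.mem_sigma, Finset.mem_inter, Finset.mem_image] at hp
      obtain ⟨-, hy, z, hz, hzy⟩ := hp
      simp only [Finset.mem_coe, Finset.mem_product]
      refine ⟨hy, ?_⟩
      rw [← hzy, inv_smul_smul]; exact hz
    · rintro ⟨g, y⟩ hp ⟨h, z⟩ hq heq
      simp only [Prod.mk.injEq] at heq
      obtain ⟨rfl, h2⟩ := heq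
      have : (h * g⁻¹) • y = y := by
        rw [mul_smul, h2, smul_inv_smul]
      have hgh : h * g⁻¹ = 1 := by
        by_contra hne
        exact hfree _ hne y this
      have hge : g = h := (mul_inv_eq_one.mp hgh).symm
      subst hge; rfl
  -- sum lower bound
  have lower : (S.card : ℝ) * (α * Y.card) ≤ ∑ g ∈ S, ((Y ∩ Y.image (fun y => g • y)).card : ℝ) := by
    have := Finset.card_nsmul_le_sum S (fun g => ((Y ∩ Y.image (fun y => g • y)).card : ℝ)) (α * Y.card) (fun g hg => by rw [hS, Set.Finite.mem_toFinset] at hg; exact hg)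
    rwa [nsmul_eq_mul] at this
  have key' : (∑ g ∈ S, ((Y ∩ Y.image (fun y => g • y)).card : ℝ)) ≤ (Y.card : ℝ) * Y.card := by
    calc (∑ g ∈ S, ((Y ∩ Y.image (fun y => g • y)).card : ℝ))
        = ((∑ g ∈ S, (Y ∩ Y.image (fun y => g • y)).card : ℕ) : ℝ) := by push_cast; ring
      _ ≤ ((Y.card * Y.card : ℕ) : ℝ) := by exact_mod_cast key
      _ = (Y.card : ℝ) * Y.card := by push_cast; ring
  have hYpos : (0 : ℝ) < Y.card := by exact_mod_cast Finset.card_pos.mpr hY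
  have := lower.trans key'
  nlinarith [this]
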